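/- The character map ch^G(X): U^G(X) → ⊕_{Is Π₀(G,X)} ℚ, whose [y]-component on a basis element [x: G/H → X] is Σ over WK_y-orbits of mor(y,x) of |(WK_y)_σ|⁻¹, is injective for every proper G-CW-complex X. -/
import Mathlib


/-!
The component category `Π₀(G,X)` of a `G`-space `X` (tom Dieck): objects are
`G`-maps `x : G/H → X`, morphisms `x → y` are `G`-maps `σ : G/H → G/K` with
`y ∘ σ ≃_G x`.  An object is encoded below by the pair `(H, x(1H))`, a
`G`-map `σ : G/H → G/K` by a group element `g` (with `σ(1H) = gK`), and a
`G`-homotopy of maps `G/H → X` by a path inside the `H`-fixed-point set.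
`U^G(X)` is the free abelian group on the set of isomorphism classes of
objects, and the character map `ch^G(X)` has `[y]`-component on a basis
element `[x]` equal to `∑_{WK_y·σ ∈ WK_y\mor(y,x)} |(WK_y)_σ|⁻¹`.
-/

section ComponentCategory

variable (G : Type) [Group G] (X : Type) [TopologicalSpace X] [MulAction G X]

/-- The `H`-fixed-point set `X^H`. -/
def FixedSet (H : Subgroup G) : Set X := {z | ∀ h ∈ H, h • z = z}

/-- An object of the component category `Π₀(G,X)`: a `G`-map `x : G/H → X`,
encoded by the subgroup `H` together with the point `x(1H) ∈ X^H`. -/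
structure CompObj where
  H : Subgroup G
  pt : X
  mem : pt ∈ FixedSet G X H

/-- Isomorphism of objects of `Π₀(G,X)`: a `G`-homeomorphism `σ : G/H ≅ G/K`
(given by `g` with `g⁻¹Hg = K`) such that `y ∘ σ` is `G`-homotopic to `x`,
i.e. `x(1H)` and `g·y(1K)` lie in the same path component of `X^H`. -/
def IsoRel (a b : CompObj G X) : Prop :=
  ∃ g : G, (∀ k : G, k ∈ a.H ↔ g⁻¹ * k * g ∈ b.H) ∧
    JoinedIn (FixedSet G X a.H) a.pt (g • b.pt)

/-- The set `Is Π₀(G,X)` of isomorphism classes of objects. -/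
abbrev IsoClasses := Quot (IsoRel G X)

/-- `U^G(X)`, the free abelian group on `Is Π₀(G,X)`. -/
abbrev UG := IsoClasses G X →₀ ℤ

/-- The set of morphisms `mor(y,x)` from `y : G/K → X` to `x : G/H → X`,
viewed as the set of cosets `gH ∈ G/H` with `g⁻¹Kg ⊆ H` such that `y(1K)` and
`g·x(1H)` lie in the same path component of `X^K`. -/
def Mor (y x : CompObj G X) : Set (G ⧸ x.H) :=
  {c | ∃ g : G, QuotientGroup.mk g = c ∧ (∀ k ∈ y.H, g⁻¹ * k * g ∈ x.H) ∧
    JoinedIn (FixedSet G X y.H) y.pt (g • x.pt)}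

/-- The preimage in `G` of the group `WK_y ⊆ WK` (the isotropy group of the
component `X^K(y)` under the Weyl group action): elements of the normalizer of
`K = y.H` whose translation preserves the path component of `y`. -/
def NSet (y : CompObj G X) : Set G :=
  {n | (∀ k : G, k ∈ y.H ↔ n⁻¹ * k * n ∈ y.H) ∧
    JoinedIn (FixedSet G X y.H) y.pt (n • y.pt)}

/-- The orbit relation of the `WK_y`-action on `mor(y,x)` (by precomposition
with right translations, i.e. `n • (gH) = (ng)H`). -/
def MorRel (y x : CompObj G X) (c c' : ↥(Mor G X y x)) : Prop :=
  ∃ n ∈ NSet G X y, n • (c : G ⧸ x.H) = (c' : G ⧸ x.H)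

/-- `|(WK_y)_σ|`, the order of the isotropy group in `WK_y = N_y/K` of a
morphism `σ = gH`, computed as `|{n ∈ N_y | n·gH = gH}| / |K|`; its inverse is
the weight of the orbit of `σ` in the character map. -/
noncomputable def stabOrder (y x : CompObj G X) (c : G ⧸ x.H) : ℚ :=
  (Nat.card {n : G // n ∈ NSet G X y ∧ n • c = c} : ℚ) / (Nat.card y.H : ℚ)

/-- The `[y]`-component of the character of the basis element `[x]`:
`∑_{WK_y·σ ∈ WK_y\mor(y,x)} |(WK_y)_σ|⁻¹` (a finite sum under the `G`-CW
hypotheses below). -/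
noncomputable def chComp (y x : CompObj G X) : ℚ :=
  ∑ᶠ o : Quot (MorRel G X y x), (stabOrder G X y x ((Quot.out o : ↥(Mor G X y x)) : G ⧸ x.H))⁻¹

/-- The character map `ch^G(X) : U^G(X) → ∏_{Is Π₀(G,X)} ℚ`. -/
noncomputable def chMap (u : UG G X) : IsoClasses G X → ℚ :=
  fun oy => u.sum fun ox m => (m : ℚ) * chComp G X (Quot.out oy) (Quot.out ox)

end ComponentCategory


section AuxProof
set_option linter.unusedSectionVars false

variable {G : Type} [Group G] {X : Type} [TopologicalSpace X] [MulAction G X]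
  [ContinuousConstSMul G X]

lemma one_mem_NSet (y : CompObj G X) : (1 : G) ∈ NSet G X y := by
  refine ⟨fun k => by simp, ?_⟩
  rw [one_smul]
  exact JoinedIn.refl y.mem

lemma one_mem_Mor (x : CompObj G X) :
    (QuotientGroup.mk 1 : G ⧸ x.H) ∈ Mor G X x x := by
  refine ⟨1, rfl, fun k hk => by simpa using hk, ?_⟩
  rw [one_smul]
  exact JoinedIn.refl x.mem

lemma joinedIn_smul {S T : Set X} {a b : X} (g : G) (h : JoinedIn S a b)
    (hST : ∀ z ∈ S, g • z ∈ T) : JoinedIn T (g • a) (g • b) := by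
  obtain ⟨γ, hγ⟩ := h
  exact ⟨γ.map (continuous_const_smul g), fun t => by simpa using hST (γ t) (hγ t)⟩

lemma mor_trans {y x z : CompObj G X} (h1 : (Mor G X y x).Nonempty)
    (h2 : (Mor G X x z).Nonempty) : (Mor G X y z).Nonempty := by
  obtain ⟨c, g, -, hg, hp⟩ := h1
  obtain ⟨c', g', -, hg', hq⟩ := h2
  refine ⟨QuotientGroup.mk (g * g'), g * g', rfl, ?_, ?_⟩
  · intro k hk
    have : (g * g')⁻¹ * k * (g * g') = g'⁻¹ * (g⁻¹ * k * g) * g' := by group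
    rw [this]
    exact hg' _ (hg k hk)
  · have hq2 : JoinedIn (FixedSet G X y.H) (g • x.pt) (g • g' • z.pt) := by
      refine joinedIn_smul g hq ?_
      intro w hw k hk
      have h1 : k * g = g * (g⁻¹ * k * g) := by group
      calc k • g • w = (k * g) • w := by rw [mul_smul]
        _ = g • ((g⁻¹ * k * g) • w) := by rw [h1, mul_smul]
        _ = g • w := by rw [hw _ (hg k hk)]
    have := hp.trans hq2
    rwa [← mul_smul] at this

lemma H_finite (hproper : ∀ x : X, (MulAction.stabilizer G x : Set G).Finite)
    (y : CompObj G X) : (y.H : Set G).Finite := by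
  refine (hproper y.pt).subset ?_
  intro k hk
  exact y.mem k hk

lemma mor_antisymm (hproper : ∀ x : X, (MulAction.stabilizer G x : Set G).Finite)
    {y x : CompObj G X} (h1 : (Mor G X y x).Nonempty)
    (h2 : (Mor G X x y).Nonempty) : IsoRel G X y x := by
  obtain ⟨c, g, -, hg, hp⟩ := h1
  obtain ⟨c', g', -, hg', -⟩ := h2
  have hK : (y.H : Set G).Finite := H_finite hproper y
  have hH : (x.H : Set G).Finite := H_finite hproper x
  have hinj : Function.Injective (fun k : G => g⁻¹ * k * g) := by
    intro a b hab
    simpa using mul_left_cancel (mul_right_cancel hab)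
  have hinj' : Function.Injective (fun k : G => g'⁻¹ * k * g') := by
    intro a b hab
    simpa using mul_left_cancel (mul_right_cancel hab)
  set A : Set G := (fun k : G => g⁻¹ * k * g) '' (y.H : Set G) with hA
  set B : Set G := (fun k : G => g'⁻¹ * k * g') '' (x.H : Set G) with hB
  have hAH : A ⊆ (x.H : Set G) := by
    rintro - ⟨k, hk, rfl⟩; exact hg k hk
  have hBK : B ⊆ (y.H : Set G) := by
    rintro - ⟨k, hk, rfl⟩; exact hg' k hk
  have hcardA : A.ncard = (y.H : Set G).ncard := Set.ncard_image_of_injective _ hinj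
  have hcardB : B.ncard = (x.H : Set G).ncard := Set.ncard_image_of_injective _ hinj'
  have hle1 : A.ncard ≤ (x.H : Set G).ncard := Set.ncard_le_ncard hAH hH
  have hle2 : B.ncard ≤ (y.H : Set G).ncard := Set.ncard_le_ncard hBK hK
  have hAeq : A = (x.H : Set G) := by
    refine Set.eq_of_subset_of_ncard_le hAH ?_ hH
    omega
  refine ⟨g, ?_, hp⟩
  intro k
  constructor
  · intro hk; exact hg k hk
  · intro hk
    have hk2 : g⁻¹ * k * g ∈ A := hAeq ▸ (show g⁻¹ * k * g ∈ (x.H : Set G) from hk)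
    obtain ⟨k', hk', hkk⟩ := hk2
    have : k' = k := hinj hkk
    rwa [← this]

lemma stabOrder_pos (hproper : ∀ x : X, (MulAction.stabilizer G x : Set G).Finite)
    (hstab : ∀ (y x : CompObj G X) (c : G ⧸ x.H),
      Finite {n : G // n ∈ NSet G X y ∧ n • c = c})
    (y x : CompObj G X) (c : G ⧸ x.H) : 0 < stabOrder G X y x c := by
  have h1 : Finite {n : G // n ∈ NSet G X y ∧ n • c = c} := hstab y x c
  have h2 : Nonempty {n : G // n ∈ NSet G X y ∧ n • c = c} :=
    ⟨⟨1, one_mem_NSet y, one_smul _ _⟩⟩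
  have hn : (0 : ℚ) < Nat.card {n : G // n ∈ NSet G X y ∧ n • c = c} := by
    exact_mod_cast Nat.card_pos
  have hKfin : Finite y.H := (H_finite hproper y).to_subtype
  have hd : (0 : ℚ) < Nat.card y.H := by exact_mod_cast Nat.card_pos
  exact div_pos hn hd

lemma chComp_pos (hproper : ∀ x : X, (MulAction.stabilizer G x : Set G).Finite)
    (horbits : ∀ y x : CompObj G X, Finite (Quot (MorRel G X y x)))
    (hstab : ∀ (y x : CompObj G X) (c : G ⧸ x.H),
      Finite {n : G // n ∈ NSet G X y ∧ n • c = c})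
    {y x : CompObj G X} (h : (Mor G X y x).Nonempty) : 0 < chComp G X y x := by
  haveI := horbits y x
  haveI : Fintype (Quot (MorRel G X y x)) := Fintype.ofFinite _
  haveI : Nonempty ↥(Mor G X y x) := h.to_subtype
  haveI : Nonempty (Quot (MorRel G X y x)) := ⟨Quot.mk _ (Classical.arbitrary _)⟩
  rw [chComp, finsum_eq_sum_of_fintype]
  refine Finset.sum_pos (fun o _ => ?_) Finset.univ_nonempty
  exact inv_pos.mpr (stabOrder_pos hproper hstab y x _)

lemma chComp_eq_zero {y x : CompObj G X} (h : Mor G X y x = ∅) :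
    chComp G X y x = 0 := by
  haveI : IsEmpty ↥(Mor G X y x) := by rw [h]; exact Set.isEmpty_coe_sort.mpr rfl
  haveI : IsEmpty (Quot (MorRel G X y x)) := by
    constructor
    intro q
    induction q using Quot.ind with
    | _ a => exact IsEmpty.false a
  rw [chComp, finsum_of_isEmpty]

lemma exists_max {α : Type} (r : α → α → Prop)
    (htrans : ∀ a b c, r a b → r b c → r a c)
    (hanti : ∀ a b, r a b → r b a → a = b)
    (s : Finset α) (hs : s.Nonempty) :
    ∃ a ∈ s, ∀ b ∈ s, r a b → b = a := by
  classical
  induction s using Finset.strongInduction with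
  | _ s ih =>
    obtain ⟨a, ha⟩ := hs
    by_cases hcase : ∀ b ∈ s, r a b → b = a
    · exact ⟨a, ha, hcase⟩
    · push_neg at hcase
      obtain ⟨b, hb, hab, hba⟩ := hcase
      set t : Finset α := s.filter (fun c => r a c ∧ c ≠ a) with ht
      have hbt : b ∈ t := by simp [ht, hb, hab, hba]
      have hat : a ∉ t := by simp [ht]
      have hts : t ⊂ s := by
        refine Finset.ssubset_iff_of_subset (Finset.filter_subset _ _) |>.mpr ⟨a, ha, hat⟩
      obtain ⟨m, hm, hmax⟩ := ih t hts ⟨b, hbt⟩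
      have hamn : r a m ∧ m ≠ a := by
        have := Finset.mem_filter.mp hm; exact this.2
      refine ⟨m, Finset.filter_subset _ _ hm, ?_⟩
      intro c hc hmc
      have hac : r a c := htrans _ _ _ hamn.1 hmc
      by_cases hca : c = a
      · exfalso
        exact hamn.2 (hanti _ _ (hca ▸ hmc) hamn.1)
      · exact hmax c (Finset.mem_filter.mpr ⟨hc, hac, hca⟩) hmc

end AuxProof


/-- for a proper `G`-CW-complex `X` (the action is
continuous and proper — all isotropy groups are finite — and, as holds for any
proper `G`-CW-complex, each morphism set `mor(y,x)` decomposes into finitely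
many `WK_y`-orbits with finite isotropy groups), the character map
`

ch^G(X) : U^G(X) → ∏_{Is Π₀(G,X)} ℚ` is injective. -/
theorem character_map_injective
    (G : Type) [Group G] (X : Type) [TopologicalSpace X] [MulAction G X]
    [ContinuousConstSMul G X]
    (hproper : ∀ x : X, (MulAction.stabilizer G x : Set G).Finite)
    (horbits : ∀ y x : CompObj G X, Finite (Quot (MorRel G X y x)))
    (hstab : ∀ (y x : CompObj G X) (c : G ⧸ x.H),
      Finite {n : G // n ∈ NSet G X y ∧ n • c = c}) :
    Function.Injective (chMap G X) := by
  intro u v huv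
  by_contra hne
  set w : UG G X := u - v with hw
  have hwne : w ≠ 0 := sub_ne_zero.mpr hne
  have hch : ∀ oy, chMap G X w oy = 0 := by
    intro oy
    have hsub : chMap G X w oy = chMap G X u oy - chMap G X v oy := by
      unfold chMap
      exact Finsupp.sum_sub_index (fun a b1 b2 => by push_cast; ring)
    rw [hsub, huv, sub_self]
  have hsupp : w.support.Nonempty := Finsupp.support_nonempty_iff.mpr hwne
  set r : IsoClasses G X → IsoClasses G X → Prop :=
    fun a b => (Mor G X (Quot.out a) (Quot.out b)).Nonempty with hr
  obtain ⟨oy, hmem, hmax⟩ := exists_max r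
    (fun a b c hab hbc => mor_trans hab hbc)
    (fun a b hab hba => by
      have hiso := mor_antisymm hproper hab hba
      calc a = Quot.mk _ (Quot.out a) := (Quot.out_eq a).symm
        _ = Quot.mk _ (Quot.out b) := Quot.sound hiso
        _ = b := Quot.out_eq b)
    w.support hsupp
  have hkey : chMap G X w oy
      = w oy * chComp G X (Quot.out oy) (Quot.out oy) := by
    unfold chMap Finsupp.sum
    refine Finset.sum_eq_single_of_mem oy hmem ?_
    intro b hb hbne
    have hemp : Mor G X (Quot.out oy) (Quot.out b) = ∅ := by
      by_contra hne'
      exact hbne (hmax b hb (Set.nonempty_iff_ne_empty.mpr hne'))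
    show (w b : ℚ) * chComp G X (Quot.out oy) (Quot.out b) = 0
    rw [chComp_eq_zero hemp, mul_zero]
  have hpos : 0 < chComp G X (Quot.out oy) (Quot.out oy) :=
    chComp_pos hproper horbits hstab ⟨_, one_mem_Mor _⟩
  have hwoy : (w oy : ℚ) ≠ 0 := by
    exact_mod_cast Finsupp.mem_support_iff.mp hmem
  have : chMap G X w oy ≠ 0 := by
    rw [hkey]
    exact mul_ne_zero hwoy (ne_of_gt hpos)
  exact this (hch oy)
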